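/- Let n ≥ 3 be odd, let a = b0, b1, …, bn = c be elements of M with b0 β b1 γ b2 β b3 … β bn (consecutive elements alternately β- and γ-related, starting and ending with β) and a α c. Then there exists an n-(n−2)-n chain. (Base case of the odd induction in the proof of Theorem 1.1, identity (1.4).) -/

import Mathlib

/-- Alternating relational composition with `k` factors, alternating between
`δ` and `ε`, starting with `δ`.  `AltRel δ ε 0` is equality. -/
def AltRel {M : Type*} (δ ε : M → M → Prop) : ℕ → M → M → Prop
  | 0, x, z => x = z
  | k+1, x, z => ∃ y, δ x y ∧ AltRel ε δ k y z

/-- A ternary operation `t` is compatible with the relation `θ`. -/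
def Compat {M : Type*} (θ : M → M → Prop) (t : M → M → M → M) : Prop :=
  ∀ x x' y y' z z', θ x x' → θ y y' → θ z z' → θ (t x y z) (t x' y' z')

/-- An `n`-`ℓ`-`n` chain from `a` to `c`, encoded as a function `D : ℕ → M` whose
relevant values are the `2*n + ℓ + 1` elements
`A₀,…,A_{n-1}, B₀,…,B_ℓ, C₁,…,C_n` (so `B j = D (n + j)`):
consecutive elements are alternately `β`- and `γ`-related starting with `β`,
(C1) every element is `α`-related to `a`, and
(C2) for every `j ≤ ℓ`, both `(a, B j)` and `(B j, c)` belong to the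
alternating composition of `β` and `γ` with `n` factors starting with `β`. -/
def IsNLNChain {M : Type*} (α β γ : M → M → Prop) (n ℓ : ℕ) (a c : M)
    (D : ℕ → M) : Prop :=
  D 0 = a ∧ D (2*n + ℓ) = c ∧
  (∀ i < 2*n + ℓ, if Even i then β (D i) (D (i+1)) else γ (D i) (D (i+1))) ∧
  (∀ i ≤ 2*n + ℓ, α a (D i)) ∧
  (∀ j ≤ ℓ, AltRel β γ n a (D (n + j)) ∧ AltRel β γ n (D (n + j)) c)

/-- From an alternating chain of elements `f 0, f 1, …, f m` one gets an
`AltRel` statement. -/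
theorem altrel_of_chain {M : Type*} : ∀ (m : ℕ) (β γ : M → M → Prop) (f : ℕ → M),
    (∀ i < m, if Even i then β (f i) (f (i+1)) else γ (f i) (f (i+1))) →
    AltRel β γ m (f 0) (f m) := by
  intro m
  induction m with
  | zero => intro β γ f _; rfl
  | succ m ih =>
    intro β γ f h
    refine ⟨f 1, ?_, ?_⟩
    · have := h 0 (Nat.succ_pos m)
      simpa using this
    · have := ih γ β (fun i => f (i+1)) ?_
      · simpa using this
      · intro i hi
        have h2 := h (i+1) (by omega)
        simp only [Nat.even_add_one] at h2
        by_cases he : Even i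
        · rw [if_neg (not_not_intro he)] at h2
          simp only [if_pos he]
          exact h2
        · rw [if_pos he] at h2
          simp only [if_neg he]
          exact h2

theorem stmt_9
    {M : Type*} [Nonempty M]
    (t1 t2 t3 : M → M → M → M) (α β γ : M → M → Prop)
    (hJ1 : ∀ x y : M, t1 x y x = x)
    (hJ2 : ∀ x y : M, t2 x y x = x)
    (hJ3 : ∀ x y : M, t3 x y x = x)
    (hJ4 : ∀ x z : M, t1 x x z = x)
    (hJ5 : ∀ x z : M, t1 x z z = t2 x z z)
    (hJ6 : ∀ x z : M, t2 x x z = t3 x x z)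
    (hJ7 : ∀ x z : M, t3 x z z = z)
    (hα : Equivalence α) (hβ : Equivalence β) (hγ : Equivalence γ)
    (hcong : ∀ θ ∈ ({α, β, γ} : Set (M → M → Prop)),
      Compat θ t1 ∧ Compat θ t2 ∧ Compat θ t3)
    (n : ℕ) (hn : 3 ≤ n) (hno : Odd n) (a c : M) (b : ℕ → M)
    (hb0 : b 0 = a) (hbn : b n = c)
    (hbalt : ∀ i < n, if Even i then β (b i) (b (i+1)) else γ (b i) (b (i+1)))
    (hac : α a c) :
    ∃ D : ℕ → M, IsNLNChain α β γ n (n - 2) a c D := by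
  obtain ⟨hα1, hα2, hα3⟩ := hcong α (by simp)
  obtain ⟨hβ1, hβ2, hβ3⟩ := hcong β (by simp)
  obtain ⟨hγ1, hγ2, hγ3⟩ := hcong γ (by simp)
  -- parity transfer helper
  have par : ∀ i k : ℕ, i % 2 = k % 2 → (Even i ↔ Even k) := by
    intro i k h
    rw [Nat.even_iff, Nat.even_iff, h]
  -- the chain
  set D : ℕ → M := fun i =>
    if i < n then t1 a (b i) c
    else if i ≤ 2*n-2 then t2 a (b (2*n-1-i)) c
    else t3 a (b (i - (2*n-2))) c with hD
  have hDA : ∀ i, i < n → D i = t1 a (b i) c := by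
    intro i h; simp only [hD]; rw [if_pos h]
  have hDB : ∀ i, ¬ i < n → i ≤ 2*n-2 → D i = t2 a (b (2*n-1-i)) c := by
    intro i h1 h2; simp only [hD]; rw [if_neg h1, if_pos h2]
  have hDC : ∀ i, ¬ i ≤ 2*n-2 → D i = t3 a (b (i - (2*n-2))) c := by
    intro i h2; simp only [hD]; rw [if_neg (by omega), if_neg h2]
  refine ⟨D, ?_, ?_, ?_, ?_, ?_⟩
  · -- D 0 = a
    rw [hDA 0 (by omega), hb0, hJ4]
  · -- D (2*n + (n-2)) = c
    rw [hDC _ (by omega), show 2*n + (n-2) - (2*n-2) = n by omega, hbn, hJ7]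
  · -- alternating steps
    intro i hi
    by_cases h1 : i < n - 1
    · -- interior of the A-part
      rw [hDA i (by omega), hDA (i+1) (by omega)]
      have hb := hbalt i (by omega)
      by_cases he : Even i
      · rw [if_pos he] at hb ⊢
        exact hβ1 _ _ _ _ _ _ (hβ.refl a) hb (hβ.refl c)
      · rw [if_neg he] at hb ⊢
        exact hγ1 _ _ _ _ _ _ (hγ.refl a) hb (hγ.refl c)
    · by_cases h2 : i = n - 1
      · -- junction A → B
        subst h2
        have heven : Even (n-1) := by
          obtain ⟨m, hm⟩ := hno; exact ⟨m, by omega⟩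
        rw [if_pos heven]
        rw [hDA (n-1) (by omega), show n-1+1 = n by omega,
          hDB n (by omega) (by omega), show 2*n-1-n = n-1 by omega]
        have hb := hbalt (n-1) (by omega)
        rw [if_pos heven, show n-1+1 = n by omega, hbn] at hb
        have s1 : β (t1 a (b (n-1)) c) (t1 a c c) :=
          hβ1 _ _ _ _ _ _ (hβ.refl a) hb (hβ.refl c)
        have s2 : β (t2 a c c) (t2 a (b (n-1)) c) :=
          hβ2 _ _ _ _ _ _ (hβ.refl a) (hβ.symm hb) (hβ.refl c)
        rw [hJ5] at s1
        exact hβ.trans s1 s2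
      · by_cases h3 : i < 2*n - 2
        · -- interior of the B-part
          have hkn : 2*n-2-i < n := by omega
          rw [hDB i (by omega) (by omega), hDB (i+1) (by omega) (by omega),
            show 2*n-1-i = (2*n-2-i)+1 by omega, show 2*n-1-(i+1) = 2*n-2-i by omega]
          have hb := hbalt (2*n-2-i) hkn
          have hpar : Even i ↔ Even (2*n-2-i) := par _ _ (by omega)
          by_cases he : Even i
          · rw [if_pos he]
            rw [if_pos (hpar.mp he)] at hb
            exact hβ2 _ _ _ _ _ _ (hβ.refl a) (hβ.symm hb) (hβ.refl c)
          · rw [if_neg he]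
            rw [if_neg (fun h => he (hpar.mpr h))] at hb
            exact hγ2 _ _ _ _ _ _ (hγ.refl a) (hγ.symm hb) (hγ.refl c)
        · by_cases h4 : i = 2*n - 2
          · -- junction B → C
            subst h4
            have heven : Even (2*n-2) := by
              refine (par _ _ ?_).mpr (Even.zero); omega
            rw [if_pos heven]
            rw [hDB (2*n-2) (by omega) (by omega), show 2*n-1-(2*n-2) = 1 by omega,
              hDC (2*n-2+1) (by omega), show 2*n-2+1 - (2*n-2) = 1 by omega]
            have hb := hbalt 0 (by omega)
            rw [if_pos Even.zero, hb0] at hb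
            have s1 : β (t2 a (b 1) c) (t2 a a c) :=
              hβ2 _ _ _ _ _ _ (hβ.refl a) (hβ.symm hb) (hβ.refl c)
            have s2 : β (t3 a a c) (t3 a (b 1) c) :=
              hβ3 _ _ _ _ _ _ (hβ.refl a) hb (hβ.refl c)
            rw [hJ6] at s1
            exact hβ.trans s1 s2
          · -- interior of the C-part
            have hk1 : 1 ≤ i - (2*n-2) := by omega
            have hkn : i - (2*n-2) < n := by omega
            rw [hDC i (by omega), hDC (i+1) (by omega),
              show i+1 - (2*n-2) = (i - (2*n-2)) + 1 by omega]
            have hb := hbalt (i - (2*n-2)) hkn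
            have hpar : Even i ↔ Even (i - (2*n-2)) := par _ _ (by omega)
            by_cases he : Even i
            · rw [if_pos he]
              rw [if_pos (hpar.mp he)] at hb
              exact hβ3 _ _ _ _ _ _ (hβ.refl a) hb (hβ.refl c)
            · rw [if_neg he]
              rw [if_neg (fun h => he (hpar.mpr h))] at hb
              exact hγ3 _ _ _ _ _ _ (hγ.refl a) hb (hγ.refl c)
  · -- condition (C1)
    have key : ∀ (t : M → M → M → M), Compat α t → (∀ x y, t x y x = x) →
        ∀ m, α a (t a (b m) c) := by
      intro t hc hid m
      have h1 : α (t a (b m) c) (t a (b m) a) :=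
        hc _ _ _ _ _ _ (hα.refl a) (hα.refl (b m)) (hα.symm hac)
      rw [hid] at h1
      exact hα.symm h1
    intro i _
    by_cases h1 : i < n
    · rw [hDA i h1]; exact key t1 hα1 hJ1 _
    · by_cases h2 : i ≤ 2*n-2
      · rw [hDB i h1 h2]; exact key t2 hα2 hJ2 _
      · rw [hDC i h2]; exact key t3 hα3 hJ3 _
  · -- condition (C2)
    intro j hj
    have hDnj : D (n+j) = t2 a (b (n-1-j)) c := by
      rw [hDB (n+j) (by omega) (by omega), show 2*n-1-(n+j) = n-1-j by omega]
    rw [hDnj]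
    constructor
    · -- AltRel β γ n a B_j
      have := altrel_of_chain n β γ (fun i => t2 a (b (n-1-j)) (b i)) ?_
      · rwa [hb0, hJ2, hbn] at this
      · intro i hi
        have hb := hbalt i hi
        by_cases he : Even i
        · rw [if_pos he] at hb ⊢
          exact hβ2 _ _ _ _ _ _ (hβ.refl a) (hβ.refl _) hb
        · rw [if_neg he] at hb ⊢
          exact hγ2 _ _ _ _ _ _ (hγ.refl a) (hγ.refl _) hb
    · -- AltRel β γ n B_j c
      have := altrel_of_chain n β γ (fun i => t2 (b i) (b (n-1-j)) c) ?_
      · rwa [hb0, hbn, hJ2] at this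
      · intro i hi
        have hb := hbalt i hi
        by_cases he : Even i
        · rw [if_pos he] at hb ⊢
          exact hβ2 _ _ _ _ _ _ hb (hβ.refl _) (hβ.refl c)
        · rw [if_neg he] at hb ⊢
          exact hγ2 _ _ _ _ _ _ hb (hγ.refl _) (hγ.refl c)
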